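/- arXiv:1703.06848 — 2 statements merged into one kernel-verified Lean document; each statement's English description precedes it below -/
import Mathlib

section
/- Let m, N ∈ ℕ with N ≥ 1, let a ∈ ℝ, h > 0, and define grid nodes x_j = a + j·h for j = 0,…,N, with cells I_j = [x_{j−1}, x_j] for j = 1,…,N. Let s ≥ 1, let α_1,…,α_s ∈ ℝ be the weights of an s-stage one-step method, let Δt ∈ ℝ, and for each stage i = 1,…,s and each cell j = 1,…,N let F_{i,j} be a real polynomial (the stage flux on cell I_j). For each cell j let u_j and v_j be real polynomials (the solution on cell I_j before and after the step) satisfying the update v_j = u_j − Δt · Σ_{i=1}^{s} α_i · (F_{i,j})′, where ′ denotes the polynomial derivative. Assume the stage fluxes have m continuous derivatives across interfaces and are periodic: for every i, every k with 0 ≤ k ≤ m, and every interior node index j = 1,…,N−1, the k-th derivative of F_{i,j} evaluated at x_j equals the k-th derivative of F_{i,j+1} evaluated at x_j; and the k-th derivative of F_{i,N} at x_N equals the k-th derivative of F_{i,1} at x_0. Then for every k with 0 ≤ k ≤ m, the total integral of the k-th spatial derivative is conserved over the step: Σ_{j=1}^{N} ∫_{x_{j−1}}^{x_j} (d^k/dx^k)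 v_j(x) dx = Σ_{j=1}^{N} ∫_{x_{j−1}}^{x_j} (d^k/dx^k) u_j(x) dx. -/
open Polynomial intervalIntegral

lemma poly_integral_deriv' (p : Polynomial ℝ) (x y : ℝ) :
    ∫ t in x..y, (derivative p).eval t = p.eval y - p.eval x := by
  have hd : ∀ t, deriv (fun z => p.eval z) t = (derivative p).eval t :=
    fun t => (p.hasDerivAt t).deriv
  rw [show (fun t => (derivative p).eval t) = deriv (fun z => p.eval z) from (funext hd).symm]
  apply intervalIntegral.integral_deriv_eq_sub
  · exact fun t _ => (p.hasDerivAt t).differentiableAt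
  · rw [funext hd]
    exact (p.derivative.continuous).intervalIntegrable x y

/-- Conservation theorem for the flux-conservative Hermite method applied to
`u_t + f(u)_x = 0` with periodic boundary conditions on the uniform grid `x_j = a + j h`,
cells `I_j = [x_{j-1}, x_j]` for `j = 1, …, N`.  If the per-cell solution polynomials are
updated by an `s`-stage one-step method `v_j = u_j - Δt ∑ i, α_i (F_{i,j})'`, and the stage
flux polynomials agree in derivatives of order `0, …, m` at every interior node and
periodically at the endpoints, then the total integral of each spatial derivative of order
`k ≤ m` is conserved over the step. -/
theorem flux_conservative_hermite_conservation
    (m N : ℕ) (hN : 1 ≤ N) (a h : ℝ) (hh : 0 < h)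
    (s : ℕ) (hs : 1 ≤ s) (α : Fin s → ℝ) (Δt : ℝ)
    (F : Fin s → ℕ → Polynomial ℝ) (u v : ℕ → Polynomial ℝ)
    (hupdate : ∀ j ∈ Finset.Icc 1 N,
      v j = u j - C Δt * ∑ i, C (α i) * derivative (F i j))
    (hcont : ∀ (i : Fin s), ∀ k ≤ m, ∀ j ∈ Finset.Icc 1 (N - 1),
      (derivative^[k] (F i j)).eval (a + (j : ℝ) * h)
        = (derivative^[k] (F i (j + 1))).eval (a + (j : ℝ) * h))
    (hper : ∀ (i : Fin s), ∀ k ≤ m,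
      (derivative^[k] (F i N)).eval (a + (N : ℝ) * h)
        = (derivative^[k] (F i 1)).eval a) :
    ∀ k ≤ m,
      ∑ j ∈ Finset.Icc 1 N,
          (∫ x in (a + ((j - 1 : ℕ) : ℝ) * h)..(a + (j : ℝ) * h),
            (derivative^[k] (v j)).eval x)
        = ∑ j ∈ Finset.Icc 1 N,
            (∫ x in (a + ((j - 1 : ℕ) : ℝ) * h)..(a + (j : ℝ) * h),
              (derivative^[k] (u j)).eval x) := by
  intro k hk
  set xj : ℕ → ℝ := fun n => a + (n : ℝ) * h with hxj
  -- the "flux potential" polynomial on each cell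
  set P : ℕ → Polynomial ℝ := fun j => C Δt * ∑ i, C (α i) * derivative^[k] (F i j) with hP
  have hder : ∀ j ∈ Finset.Icc 1 N,
      derivative^[k] (v j) = derivative^[k] (u j) - derivative (P j) := by
    intro j hj
    rw [hupdate j hj, iterate_derivative_sub, hP]
    congr 1
    rw [derivative_C_mul, iterate_derivative_C_mul, derivative_sum, iterate_derivative_sum]
    congr 1
    apply Finset.sum_congr rfl
    intro i _
    rw [derivative_C_mul, iterate_derivative_C_mul]
    congr 1
    rw [← Function.iterate_succ_apply]
    exact Function.iterate_succ_apply' _ k (F i j)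
  have cell : ∀ j ∈ Finset.Icc 1 N,
      (∫ x in xj (j-1)..xj j, (derivative^[k] (v j)).eval x)
        = (∫ x in xj (j-1)..xj j, (derivative^[k] (u j)).eval x)
          - ((P j).eval (xj j) - (P j).eval (xj (j-1))) := by
    intro j hj
    rw [show (fun x => (derivative^[k] (v j)).eval x)
        = fun x => (derivative^[k] (u j)).eval x - (derivative (P j)).eval x by
          funext x; rw [hder j hj]; simp]
    rw [intervalIntegral.integral_sub
      (((derivative^[k] (u j)).continuous).intervalIntegrable _ _)
      (((derivative (P j)).continuous).intervalIntegrable _ _),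
      poly_integral_deriv']
  calc ∑ j ∈ Finset.Icc 1 N,
          (∫ x in (a + ((j - 1 : ℕ) : ℝ) * h)..(a + (j : ℝ) * h),
            (derivative^[k] (v j)).eval x)
      = ∑ j ∈ Finset.Icc 1 N,
          ((∫ x in xj (j-1)..xj j, (derivative^[k] (u j)).eval x)
            - ((P j).eval (xj j) - (P j).eval (xj (j-1)))) :=
        Finset.sum_congr rfl fun j hj => cell j hj
    _ = ∑ j ∈ Finset.Icc 1 N, (∫ x in xj (j-1)..xj j, (derivative^[k] (u j)).eval x)
          - ∑ j ∈ Finset.Icc 1 N, ((P j).eval (xj j) - (P j).eval (xj (j-1))) := by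
        rw [Finset.sum_sub_distrib]
    _ = ∑ j ∈ Finset.Icc 1 N, (∫ x in xj (j-1)..xj j, (derivative^[k] (u j)).eval x) := by
        rw [sub_eq_self]
        -- telescoping
        set φ : ℕ → ℝ := fun j => (P (j+1)).eval (xj j) with hφ
        have hL : ∀ j ∈ Finset.Icc 1 N, (P j).eval (xj (j-1)) = φ (j-1) := by
          intro j hj
          simp only [Finset.mem_Icc] at hj
          have hj1 : j - 1 + 1 = j := by omega
          show eval (xj (j-1)) (P j) = eval (xj (j-1)) (P (j-1+1))
          rw [hj1]
        have hR : ∀ j ∈ Finset.Icc 1 (N-1), (P j).eval (xj j) = φ j := by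
          intro j hj
          show eval (xj j) (P j) = eval (xj j) (P (j+1))
          simp only [hP, hxj, eval_mul, eval_C, eval_finset_sum]
          congr 1
          refine Finset.sum_congr rfl fun i _ => ?_
          rw [hcont i k hk j hj]
        have hRN : (P N).eval (xj N) = φ 0 := by
          show eval (xj N) (P N) = eval (xj 0) (P (0+1))
          simp only [hP, hxj, eval_mul, eval_C, eval_finset_sum, Nat.cast_zero,
            zero_mul, add_zero, zero_add]
          congr 1
          refine Finset.sum_congr rfl fun i _ => ?_
          rw [hper i k hk]
        have hsplit : Finset.Icc 1 N = Finset.Icc 1 (N-1+1) := by rw [Nat.sub_add_cancel hN]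
        rw [hsplit, Finset.sum_Icc_succ_top (by omega)]
        rw [Nat.sub_add_cancel hN, hRN, hL N (by simp [hN])]
        have : ∑ j ∈ Finset.Icc 1 (N-1), ((P j).eval (xj j) - (P j).eval (xj (j-1)))
            = ∑ j ∈ Finset.Icc 1 (N-1), (φ j - φ (j-1)) := by
          apply Finset.sum_congr rfl
          intro j hj
          have hj' : j ∈ Finset.Icc 1 N := by
            simp only [Finset.mem_Icc] at hj ⊢; omega
          rw [hR j hj, hL j hj']
        rw [this]
        have htel : ∀ n : ℕ, ∑ j ∈ Finset.Icc 1 n, (φ j - φ (j-1)) = φ n - φ 0 := by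
          intro n
          induction n with
          | zero => simp
          | succ n ih =>
            rw [Finset.sum_Icc_succ_top (by omega), ih]
            simp only [Nat.add_sub_cancel]
            ring
        rw [htel]
        ring
    _ = ∑ j ∈ Finset.Icc 1 N,
          (∫ x in (a + ((j - 1 : ℕ) : ℝ) * h)..(a + (j : ℝ) * h),
            (derivative^[k] (u j)).eval x) := rfl
end

section
/- Let m, N_x, N_y ∈ ℕ with N_x, N_y ≥ 1, let a, b ∈ ℝ, h_x, h_y > 0, and define nodes x_j = a + j·h_x (j = 0,…,N_x) and y_k = b + k·h_y (k = 0,…,N_y), with cells I_{j,k} = [x_{j−1}, x_j] × [y_{k−1}, y_k]. Let s ≥ 1, α_1,…,α_s ∈ ℝ, Δt ∈ ℝ, and for each stage i and each cell (j,k) let F_{i,j,k} and G_{i,j,k} be real polynomials in two variables (the stage fluxes in the x- and y-direction). For each cell let u_{j,k} and v_{j,k} be real polynomials in two variables satisfying the update v_{j,k} = u_{j,k} − Δt · Σ_{i=1}^{s} α_i · ( ∂_x F_{i,j,k} + ∂_y G_{i,j,k} ). Assume the fluxes are continuous across the corresponding interfaces and periodic: for every i, F_{i,j,k}(x_j, y)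 = F_{i,j+1,k}(x_j, y) for all y and all interior j, F_{i,N_x,k}(x_{N_x}, y) = F_{i,1,k}(x_0, y) for all y and k; and G_{i,j,k}(x, y_k) = G_{i,j,k+1}(x, y_k) for all x and all interior k, G_{i,j,N_y}(x, y_{N_y}) = G_{i,j,1}(x, y_0) for all x and j. Then the total integral of the solution is conserved over the step: Σ_{j,k} ∬_{I_{j,k}} v_{j,k}(x,y) dx dy = Σ_{j,k} ∬_{I_{j,k}} u_{j,k}(x,y) dx dy. -/
open MvPolynomial intervalIntegral

namespace FCH2D

open MeasureTheory

noncomputable def ev (P : MvPolynomial (Fin 2) ℝ) (x y : ℝ) : ℝ := eval ![x, y] P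

lemma ev_def (P : MvPolynomial (Fin 2) ℝ) (x y : ℝ) : ev P x y = eval ![x, y] P := rfl

lemma cont2 (P : MvPolynomial (Fin 2) ℝ) : Continuous fun p : ℝ × ℝ => ev P p.1 p.2 := by
  have h : Continuous fun p : ℝ × ℝ => (![p.1, p.2] : Fin 2 → ℝ) := by
    refine continuous_pi fun i => ?_
    fin_cases i
    · simpa using continuous_fst
    · simpa using continuous_snd
  exact (MvPolynomial.continuous_eval P).comp h

lemma contX (P : MvPolynomial (Fin 2) ℝ) (y : ℝ) : Continuous fun x => ev P x y := by
  have h : Continuous fun x : ℝ => (![x, y] : Fin 2 → ℝ) := by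
    refine continuous_pi fun i => ?_
    fin_cases i
    · simpa using continuous_id'
    · simpa using continuous_const
  exact (MvPolynomial.continuous_eval P).comp h

lemma contY (P : MvPolynomial (Fin 2) ℝ) (x : ℝ) : Continuous fun y => ev P x y := by
  have h : Continuous fun y : ℝ => (![x, y] : Fin 2 → ℝ) := by
    refine continuous_pi fun i => ?_
    fin_cases i
    · simpa using continuous_const
    · simpa using continuous_id'
  exact (MvPolynomial.continuous_eval P).comp h

lemma hasDerivAt_ev0 (P : MvPolynomial (Fin 2) ℝ) (y x : ℝ) :
    HasDerivAt (fun t => ev P t y) (ev (pderiv 0 P) x y) x := by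
  induction P using MvPolynomial.induction_on with
  | C r => simpa [ev, pderiv_C] using hasDerivAt_const x r
  | add p q hp hq =>
    have h : HasDerivAt (fun t => ev p t y + ev q t y)
        (ev (pderiv 0 p) x y + ev (pderiv 0 q) x y) x := hp.add hq
    simpa [ev] using h
  | mul_X p n hp =>
    fin_cases n
    · show HasDerivAt (fun t => ev (p * X 0) t y) (ev (pderiv 0 (p * X 0)) x y) x
      have h := hp.mul (hasDerivAt_id x)
      have hfun : (fun t => ev (p * X 0) t y) = fun t => ev p t y * t := by
        funext t; simp [ev]
      have hd : ev (pderiv 0 (p * X 0)) x y = ev ((pderiv 0) p) x y * x + ev p x y * 1 := by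
        simp [ev, pderiv_mul, pderiv_X_self]; ring
      rw [hfun, hd]; exact h
    · show HasDerivAt (fun t => ev (p * X 1) t y) (ev (pderiv 0 (p * X 1)) x y) x
      have h := hp.mul_const y
      have hfun : (fun t => ev (p * X 1) t y) = fun t => ev p t y * y := by
        funext t; simp [ev]
      have hd : ev (pderiv 0 (p * X 1)) x y = ev ((pderiv 0) p) x y * y := by
        simp [ev, pderiv_mul, pderiv_X_of_ne (show (1 : Fin 2) ≠ 0 by decide)]; ring
      rw [hfun, hd]; exact h

lemma hasDerivAt_ev1 (P : MvPolynomial (Fin 2) ℝ) (x y : ℝ) :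
    HasDerivAt (fun t => ev P x t) (ev (pderiv 1 P) x y) y := by
  induction P using MvPolynomial.induction_on with
  | C r => simpa [ev, pderiv_C] using hasDerivAt_const y r
  | add p q hp hq =>
    have h : HasDerivAt (fun t => ev p x t + ev q x t)
        (ev (pderiv 1 p) x y + ev (pderiv 1 q) x y) y := hp.add hq
    simpa [ev] using h
  | mul_X p n hp =>
    fin_cases n
    · show HasDerivAt (fun t => ev (p * X 0) x t) (ev (pderiv 1 (p * X 0)) x y) y
      have h := hp.mul_const x
      have hfun : (fun t => ev (p * X 0) x t) = fun t => ev p x t * x := by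
        funext t; simp [ev]
      have hd : ev (pderiv 1 (p * X 0)) x y = ev ((pderiv 1) p) x y * x := by
        simp [ev, pderiv_mul, pderiv_X_of_ne (show (0 : Fin 2) ≠ 1 by decide)]; ring
      rw [hfun, hd]; exact h
    · show HasDerivAt (fun t => ev (p * X 1) x t) (ev (pderiv 1 (p * X 1)) x y) y
      have h := hp.mul (hasDerivAt_id y)
      have hfun : (fun t => ev (p * X 1) x t) = fun t => ev p x t * t := by
        funext t; simp [ev]
      have hd : ev (pderiv 1 (p * X 1)) x y = ev ((pderiv 1) p) x y * y + ev p x y * 1 := by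
        simp [ev, pderiv_mul, pderiv_X_self]; ring
      rw [hfun, hd]; exact h

lemma ftc0 (P : MvPolynomial (Fin 2) ℝ) (y x0 x1 : ℝ) :
    ∫ x in x0..x1, ev (pderiv 0 P) x y = ev P x1 y - ev P x0 y :=
  intervalIntegral.integral_eq_sub_of_hasDerivAt (fun x _ => hasDerivAt_ev0 P y x)
    ((contX (pderiv 0 P) y).intervalIntegrable _ _)

lemma ftc1 (P : MvPolynomial (Fin 2) ℝ) (x y0 y1 : ℝ) :
    ∫ y in y0..y1, ev (pderiv 1 P) x y = ev P x y1 - ev P x y0 :=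
  intervalIntegral.integral_eq_sub_of_hasDerivAt (fun y _ => hasDerivAt_ev1 P x y)
    ((contY (pderiv 1 P) x).intervalIntegrable _ _)

lemma swap (P : MvPolynomial (Fin 2) ℝ) {x0 x1 y0 y1 : ℝ} (hx : x0 ≤ x1) (hy : y0 ≤ y1) :
    ∫ x in x0..x1, ∫ y in y0..y1, ev P x y = ∫ y in y0..y1, ∫ x in x0..x1, ev P x y := by
  have hint : Integrable (Function.uncurry (fun x y => ev P x y))
      ((volume.restrict (Set.Ioc x0 x1)).prod (volume.restrict (Set.Ioc y0 y1))) := by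
    rw [Measure.prod_restrict, ← MeasureTheory.Measure.volume_eq_prod]
    have hc : ContinuousOn (Function.uncurry (fun x y => ev P x y))
        (Set.Icc x0 x1 ×ˢ Set.Icc y0 y1) := (cont2 P).continuousOn
    exact (hc.integrableOn_compact (isCompact_Icc.prod isCompact_Icc)).mono_set
      (Set.prod_mono Set.Ioc_subset_Icc_self Set.Ioc_subset_Icc_self)
  have := MeasureTheory.integral_integral_swap hint
  simp only [intervalIntegral.integral_of_le hx, intervalIntegral.integral_of_le hy]
  exact this

noncomputable def II (P : MvPolynomial (Fin 2) ℝ) (x0 x1 y0 y1 : ℝ) : ℝ :=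
  ∫ x in x0..x1, ∫ y in y0..y1, ev P x y

lemma contParam (P : MvPolynomial (Fin 2) ℝ) (y0 y1 : ℝ) :
    Continuous fun x => ∫ y in y0..y1, ev P x y :=
  intervalIntegral.continuous_parametric_intervalIntegral_of_continuous'
    (f := fun x y => ev P x y) (cont2 P) y0 y1

lemma II_add (P Q : MvPolynomial (Fin 2) ℝ) (x0 x1 y0 y1 : ℝ) :
    II (P + Q) x0 x1 y0 y1 = II P x0 x1 y0 y1 + II Q x0 x1 y0 y1 := by
  unfold II
  have h1 : ∀ x : ℝ, ∫ y in y0..y1, ev (P + Q) x y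
      = (∫ y in y0..y1, ev P x y) + ∫ y in y0..y1, ev Q x y := by
    intro x
    have : ∀ y : ℝ, ev (P + Q) x y = ev P x y + ev Q x y := by intro y; simp [ev]
    simp_rw [this]
    exact intervalIntegral.integral_add ((contY P x).intervalIntegrable _ _)
      ((contY Q x).intervalIntegrable _ _)
  simp_rw [h1]
  exact intervalIntegral.integral_add ((contParam P y0 y1).intervalIntegrable _ _)
    ((contParam Q y0 y1).intervalIntegrable _ _)

lemma II_smul (c : ℝ) (P : MvPolynomial (Fin 2) ℝ) (x0 x1 y0 y1 : ℝ) :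
    II (C c * P) x0 x1 y0 y1 = c * II P x0 x1 y0 y1 := by
  unfold II
  have h1 : ∀ x y : ℝ, ev (C c * P) x y = c * ev P x y := by intro x y; simp [ev]
  simp_rw [h1, intervalIntegral.integral_const_mul]

lemma II_sum {ι : Type*} (t : Finset ι) (P : ι → MvPolynomial (Fin 2) ℝ) (x0 x1 y0 y1 : ℝ) :
    II (∑ i ∈ t, P i) x0 x1 y0 y1 = ∑ i ∈ t, II (P i) x0 x1 y0 y1 := by
  classical
  induction t using Finset.induction_on with
  | empty => simp [II, ev]
  | insert _ _ h ih =>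
    rw [Finset.sum_insert h, Finset.sum_insert h, II_add, ih]

lemma IId0 (P : MvPolynomial (Fin 2) ℝ) {x0 x1 : ℝ} (y0 y1 : ℝ) (hx : x0 ≤ x1) (hy : y0 ≤ y1) :
    II (pderiv 0 P) x0 x1 y0 y1
      = (∫ y in y0..y1, ev P x1 y) - ∫ y in y0..y1, ev P x0 y := by
  unfold II
  rw [swap _ hx hy]
  have h1 : ∀ y : ℝ, ∫ x in x0..x1, ev (pderiv 0 P) x y = ev P x1 y - ev P x0 y :=
    fun y => ftc0 P y x0 x1
  simp_rw [h1]
  exact intervalIntegral.integral_sub ((contY P x1).intervalIntegrable _ _)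
    ((contY P x0).intervalIntegrable _ _)

lemma IId1 (P : MvPolynomial (Fin 2) ℝ) (x0 x1 y0 y1 : ℝ) :
    II (pderiv 1 P) x0 x1 y0 y1
      = (∫ x in x0..x1, ev P x y1) - ∫ x in x0..x1, ev P x y0 := by
  unfold II
  have h1 : ∀ x : ℝ, ∫ y in y0..y1, ev (pderiv 1 P) x y = ev P x y1 - ev P x y0 :=
    fun x => ftc1 P x y0 y1
  simp_rw [h1]
  exact intervalIntegral.integral_sub ((contX P y1).intervalIntegrable _ _)
    ((contX P y0).intervalIntegrable _ _)

lemma telescope {N : ℕ} (hN : 1 ≤ N) (f g : ℕ → ℝ)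
    (hcont : ∀ j ∈ Finset.Icc 1 (N - 1), g j = f (j + 1)) (hper : g N = f 1) :
    ∑ j ∈ Finset.Icc 1 N, (g j - f j) = 0 := by
  obtain ⟨n, rfl⟩ : ∃ n, N = n + 1 := ⟨N - 1, (Nat.succ_pred_eq_of_pos hN).symm⟩
  rw [Finset.sum_sub_distrib, sub_eq_zero]
  have hsplit : Finset.Icc 1 (n + 1) = insert (n + 1) (Finset.Icc 1 n) := by
    ext j; simp; omega
  have hins : Finset.Icc 1 (n + 1) = insert 1 (Finset.Icc 2 (n + 1)) := by
    ext j; simp; omega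
  have hshift : ∑ j ∈ Finset.Icc 1 n, f (j + 1) = ∑ j ∈ Finset.Icc 2 (n + 1), f j := by
    rw [show Finset.Icc 2 (n + 1) = (Finset.Icc 1 n).map (addRightEmbedding 1) by
      rw [Finset.map_add_right_Icc], Finset.sum_map]
    rfl
  have hg : ∑ j ∈ Finset.Icc 1 (n + 1), g j = g (n + 1) + ∑ j ∈ Finset.Icc 1 n, g j := by
    rw [hsplit, Finset.sum_insert (by simp only [Finset.mem_Icc]; omega)]
  have hf2 : ∑ j ∈ Finset.Icc 1 (n + 1), f j = f 1 + ∑ j ∈ Finset.Icc 2 (n + 1), f j := by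
    rw [hins, Finset.sum_insert (by simp only [Finset.mem_Icc]; omega)]
  rw [hg, hf2, hper, ← hshift,
    Finset.sum_congr rfl (fun j hj => hcont j (by simpa using hj))]

end FCH2D

/-- Two-dimensional conservation for the flux-conservative Hermite method on the uniform
tensor-product grid `x_j = a + j h_x`, `y_k = b + k h_y`, with cells
`I_{j,k} = [x_{j-1}, x_j] × [y_{k-1}, y_k]`.  The per-cell bivariate solution polynomials are
updated by `v_{j,k} = u_{j,k} - Δt ∑ i, α_i (∂_x F_{i,j,k} + ∂_y G_{i,j,k})`.  If the
`x`-direction stage fluxes `F` are continuous across vertical interfaces and periodic, and the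
`y`-direction stage fluxes `G` are continuous across horizontal interfaces and periodic, then
the total (iterated) integral of the solution over all cells is conserved over the step. -/
theorem flux_conservative_hermite_conservation_2d
    (m Nx Ny : ℕ) (hNx : 1 ≤ Nx) (hNy : 1 ≤ Ny)
    (a b hx hy : ℝ) (hhx : 0 < hx) (hhy : 0 < hy)
    (s : ℕ) (hs : 1 ≤ s) (α : Fin s → ℝ) (Δt : ℝ)
    (F G : Fin s → ℕ → ℕ → MvPolynomial (Fin 2) ℝ)
    (u v : ℕ → ℕ → MvPolynomial (Fin 2) ℝ)
    (hupdate : ∀ j ∈ Finset.Icc 1 Nx, ∀ k ∈ Finset.Icc 1 Ny,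
      v j k = u j k - C Δt * ∑ i, C (α i) *
        (pderiv 0 (F i j k) + pderiv 1 (G i j k)))
    (hcontF : ∀ (i : Fin s), ∀ j ∈ Finset.Icc 1 (Nx - 1), ∀ k ∈ Finset.Icc 1 Ny, ∀ y : ℝ,
      eval ![a + (j : ℝ) * hx, y] (F i j k) = eval ![a + (j : ℝ) * hx, y] (F i (j + 1) k))
    (hperF : ∀ (i : Fin s), ∀ k ∈ Finset.Icc 1 Ny, ∀ y : ℝ,
      eval ![a + (Nx : ℝ) * hx, y] (F i Nx k) = eval ![a, y] (F i 1 k))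
    (hcontG : ∀ (i : Fin s), ∀ j ∈ Finset.Icc 1 Nx, ∀ k ∈ Finset.Icc 1 (Ny - 1), ∀ x : ℝ,
      eval ![x, b + (k : ℝ) * hy] (G i j k) = eval ![x, b + (k : ℝ) * hy] (G i j (k + 1)))
    (hperG : ∀ (i : Fin s), ∀ j ∈ Finset.Icc 1 Nx, ∀ x : ℝ,
      eval ![x, b + (Ny : ℝ) * hy] (G i j Ny) = eval ![x, b] (G i j 1)) :
    ∑ j ∈ Finset.Icc 1 Nx, ∑ k ∈ Finset.Icc 1 Ny,
        (∫ x in (a + ((j - 1 : ℕ) : ℝ) * hx)..(a + (j : ℝ) * hx),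
          ∫ y in (b + ((k - 1 : ℕ) : ℝ) * hy)..(b + (k : ℝ) * hy),
            eval ![x, y] (v j k))
      = ∑ j ∈ Finset.Icc 1 Nx, ∑ k ∈ Finset.Icc 1 Ny,
          (∫ x in (a + ((j - 1 : ℕ) : ℝ) * hx)..(a + (j : ℝ) * hx),
            ∫ y in (b + ((k - 1 : ℕ) : ℝ) * hy)..(b + (k : ℝ) * hy),
              eval ![x, y] (u j k)) := by
  classical
  have hXle : ∀ j : ℕ, (a + ((j - 1 : ℕ) : ℝ) * hx) ≤ a + (j : ℝ) * hx := by
    intro j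
    have h1 : ((j - 1 : ℕ) : ℝ) ≤ (j : ℝ) := Nat.cast_le.mpr (Nat.sub_le j 1)
    nlinarith [hhx.le]
  have hYle : ∀ k : ℕ, (b + ((k - 1 : ℕ) : ℝ) * hy) ≤ b + (k : ℝ) * hy := by
    intro k
    have h1 : ((k - 1 : ℕ) : ℝ) ≤ (k : ℝ) := Nat.cast_le.mpr (Nat.sub_le k 1)
    nlinarith [hhy.le]
  show (∑ j ∈ Finset.Icc 1 Nx, ∑ k ∈ Finset.Icc 1 Ny,
      FCH2D.II (v j k) (a + ((j - 1 : ℕ) : ℝ) * hx) (a + (j : ℝ) * hx)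
        (b + ((k - 1 : ℕ) : ℝ) * hy) (b + (k : ℝ) * hy))
    = ∑ j ∈ Finset.Icc 1 Nx, ∑ k ∈ Finset.Icc 1 Ny,
        FCH2D.II (u j k) (a + ((j - 1 : ℕ) : ℝ) * hx) (a + (j : ℝ) * hx)
          (b + ((k - 1 : ℕ) : ℝ) * hy) (b + (k : ℝ) * hy)
  -- per-cell identity
  have cell : ∀ j ∈ Finset.Icc 1 Nx, ∀ k ∈ Finset.Icc 1 Ny,
      FCH2D.II (v j k) (a + ((j - 1 : ℕ) : ℝ) * hx) (a + (j : ℝ) * hx)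
        (b + ((k - 1 : ℕ) : ℝ) * hy) (b + (k : ℝ) * hy)
      = FCH2D.II (u j k) (a + ((j - 1 : ℕ) : ℝ) * hx) (a + (j : ℝ) * hx)
          (b + ((k - 1 : ℕ) : ℝ) * hy) (b + (k : ℝ) * hy)
        - Δt * ∑ i, α i *
          ((((∫ y in (b + ((k - 1 : ℕ) : ℝ) * hy)..(b + (k : ℝ) * hy),
                FCH2D.ev (F i j k) (a + (j : ℝ) * hx) y)
            - ∫ y in (b + ((k - 1 : ℕ) : ℝ) * hy)..(b + (k : ℝ) * hy),
                FCH2D.ev (F i j k) (a + ((j - 1 : ℕ) : ℝ) * hx) y))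
          + (((∫ x in (a + ((j - 1 : ℕ) : ℝ) * hx)..(a + (j : ℝ) * hx),
                FCH2D.ev (G i j k) x (b + (k : ℝ) * hy))
            - ∫ x in (a + ((j - 1 : ℕ) : ℝ) * hx)..(a + (j : ℝ) * hx),
                FCH2D.ev (G i j k) x (b + ((k - 1 : ℕ) : ℝ) * hy)))) := by
    intro j hj k hk
    have h1 : u j k = v j k + C Δt * ∑ i, C (α i) *
        (pderiv 0 (F i j k) + pderiv 1 (G i j k)) := by
      rw [hupdate j hj k hk]; ring
    have h2 := congrArg (fun P => FCH2D.II P (a + ((j - 1 : ℕ) : ℝ) * hx) (a + (j : ℝ) * hx)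
        (b + ((k - 1 : ℕ) : ℝ) * hy) (b + (k : ℝ) * hy)) h1
    rw [FCH2D.II_add, FCH2D.II_smul, FCH2D.II_sum] at h2
    have h3 : ∀ i : Fin s,
        FCH2D.II (C (α i) * (pderiv 0 (F i j k) + pderiv 1 (G i j k)))
            (a + ((j - 1 : ℕ) : ℝ) * hx) (a + (j : ℝ) * hx)
            (b + ((k - 1 : ℕ) : ℝ) * hy) (b + (k : ℝ) * hy)
          = α i *
          ((((∫ y in (b + ((k - 1 : ℕ) : ℝ) * hy)..(b + (k : ℝ) * hy),
                FCH2D.ev (F i j k) (a + (j : ℝ) * hx) y)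
            - ∫ y in (b + ((k - 1 : ℕ) : ℝ) * hy)..(b + (k : ℝ) * hy),
                FCH2D.ev (F i j k) (a + ((j - 1 : ℕ) : ℝ) * hx) y))
          + (((∫ x in (a + ((j - 1 : ℕ) : ℝ) * hx)..(a + (j : ℝ) * hx),
                FCH2D.ev (G i j k) x (b + (k : ℝ) * hy))
            - ∫ x in (a + ((j - 1 : ℕ) : ℝ) * hx)..(a + (j : ℝ) * hx),
                FCH2D.ev (G i j k) x (b + ((k - 1 : ℕ) : ℝ) * hy)))) := by
      intro i
      rw [FCH2D.II_smul, FCH2D.II_add, FCH2D.IId0 _ _ _ (hXle j) (hYle k), FCH2D.IId1]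
    rw [Finset.sum_congr rfl (fun i _ => h3 i)] at h2
    linarith [h2]
  rw [Finset.sum_congr rfl (fun j hj => Finset.sum_congr rfl (fun k hk => cell j hj k hk))]
  -- telescoping in x
  have hA : ∀ i : Fin s, ∀ k ∈ Finset.Icc 1 Ny,
      ∑ j ∈ Finset.Icc 1 Nx,
        ((∫ y in (b + ((k - 1 : ℕ) : ℝ) * hy)..(b + (k : ℝ) * hy),
            FCH2D.ev (F i j k) (a + (j : ℝ) * hx) y)
        - ∫ y in (b + ((k - 1 : ℕ) : ℝ) * hy)..(b + (k : ℝ) * hy),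
            FCH2D.ev (F i j k) (a + ((j - 1 : ℕ) : ℝ) * hx) y) = 0 := by
    intro i k hk
    refine FCH2D.telescope hNx
      (fun j => ∫ y in (b + ((k - 1 : ℕ) : ℝ) * hy)..(b + (k : ℝ) * hy),
        FCH2D.ev (F i j k) (a + ((j - 1 : ℕ) : ℝ) * hx) y)
      (fun j => ∫ y in (b + ((k - 1 : ℕ) : ℝ) * hy)..(b + (k : ℝ) * hy),
        FCH2D.ev (F i j k) (a + (j : ℝ) * hx) y) ?_ ?_
    · intro j hj
      refine intervalIntegral.integral_congr fun y _ => ?_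
      have h := hcontF i j hj k hk y
      simpa [FCH2D.ev, Nat.add_sub_cancel] using h
    · refine intervalIntegral.integral_congr fun y _ => ?_
      have h := hperF i k hk y
      simpa [FCH2D.ev] using h
  -- telescoping in y
  have hB : ∀ i : Fin s, ∀ j ∈ Finset.Icc 1 Nx,
      ∑ k ∈ Finset.Icc 1 Ny,
        ((∫ x in (a + ((j - 1 : ℕ) : ℝ) * hx)..(a + (j : ℝ) * hx),
            FCH2D.ev (G i j k) x (b + (k : ℝ) * hy))
        - ∫ x in (a + ((j - 1 : ℕ) : ℝ) * hx)..(a + (j : ℝ) * hx),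
            FCH2D.ev (G i j k) x (b + ((k - 1 : ℕ) : ℝ) * hy)) = 0 := by
    intro i j hj
    refine FCH2D.telescope hNy
      (fun k => ∫ x in (a + ((j - 1 : ℕ) : ℝ) * hx)..(a + (j : ℝ) * hx),
        FCH2D.ev (G i j k) x (b + ((k - 1 : ℕ) : ℝ) * hy))
      (fun k => ∫ x in (a + ((j - 1 : ℕ) : ℝ) * hx)..(a + (j : ℝ) * hx),
        FCH2D.ev (G i j k) x (b + (k : ℝ) * hy)) ?_ ?_
    · intro k hk
      refine intervalIntegral.integral_congr fun x _ => ?_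
      have h := hcontG i j hj k hk x
      simpa [FCH2D.ev, Nat.add_sub_cancel] using h
    · refine intervalIntegral.integral_congr fun x _ => ?_
      have h := hperG i j hj x
      simpa [FCH2D.ev] using h
  -- assemble
  have hzero : ∑ j ∈ Finset.Icc 1 Nx, ∑ k ∈ Finset.Icc 1 Ny,
      (Δt * ∑ i, α i *
        ((((∫ y in (b + ((k - 1 : ℕ) : ℝ) * hy)..(b + (k : ℝ) * hy),
              FCH2D.ev (F i j k) (a + (j : ℝ) * hx) y)
          - ∫ y in (b + ((k - 1 : ℕ) : ℝ) * hy)..(b + (k : ℝ) * hy),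
              FCH2D.ev (F i j k) (a + ((j - 1 : ℕ) : ℝ) * hx) y))
        + (((∫ x in (a + ((j - 1 : ℕ) : ℝ) * hx)..(a + (j : ℝ) * hx),
              FCH2D.ev (G i j k) x (b + (k : ℝ) * hy))
          - ∫ x in (a + ((j - 1 : ℕ) : ℝ) * hx)..(a + (j : ℝ) * hx),
              FCH2D.ev (G i j k) x (b + ((k - 1 : ℕ) : ℝ) * hy))))) = 0 := by
    simp only [Finset.mul_sum]
    rw [Finset.sum_congr rfl (fun j _ => Finset.sum_comm), Finset.sum_comm]
    refine Finset.sum_eq_zero fun i _ => ?_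
    have hsplit : ∀ j ∈ Finset.Icc 1 Nx, ∀ k ∈ Finset.Icc 1 Ny, ∀ p q : ℝ,
        Δt * (α i * (p + q)) = Δt * α i * p + Δt * α i * q := by intros; ring
    calc ∑ j ∈ Finset.Icc 1 Nx, ∑ k ∈ Finset.Icc 1 Ny, Δt * (α i *
          ((((∫ y in (b + ((k - 1 : ℕ) : ℝ) * hy)..(b + (k : ℝ) * hy),
                FCH2D.ev (F i j k) (a + (j : ℝ) * hx) y)
            - ∫ y in (b + ((k - 1 : ℕ) : ℝ) * hy)..(b + (k : ℝ) * hy),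
                FCH2D.ev (F i j k) (a + ((j - 1 : ℕ) : ℝ) * hx) y))
          + (((∫ x in (a + ((j - 1 : ℕ) : ℝ) * hx)..(a + (j : ℝ) * hx),
                FCH2D.ev (G i j k) x (b + (k : ℝ) * hy))
            - ∫ x in (a + ((j - 1 : ℕ) : ℝ) * hx)..(a + (j : ℝ) * hx),
                FCH2D.ev (G i j k) x (b + ((k - 1 : ℕ) : ℝ) * hy)))))
        = (∑ j ∈ Finset.Icc 1 Nx, ∑ k ∈ Finset.Icc 1 Ny, Δt * α i *
            ((∫ y in (b + ((k - 1 : ℕ) : ℝ) * hy)..(b + (k : ℝ) * hy),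
                FCH2D.ev (F i j k) (a + (j : ℝ) * hx) y)
            - ∫ y in (b + ((k - 1 : ℕ) : ℝ) * hy)..(b + (k : ℝ) * hy),
                FCH2D.ev (F i j k) (a + ((j - 1 : ℕ) : ℝ) * hx) y))
          + ∑ j ∈ Finset.Icc 1 Nx, ∑ k ∈ Finset.Icc 1 Ny, Δt * α i *
            ((∫ x in (a + ((j - 1 : ℕ) : ℝ) * hx)..(a + (j : ℝ) * hx),
                FCH2D.ev (G i j k) x (b + (k : ℝ) * hy))
            - ∫ x in (a + ((j - 1 : ℕ) : ℝ) * hx)..(a + (j : ℝ) * hx),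
                FCH2D.ev (G i j k) x (b + ((k - 1 : ℕ) : ℝ) * hy)) := by
          rw [← Finset.sum_add_distrib]
          refine Finset.sum_congr rfl fun j hj => ?_
          rw [← Finset.sum_add_distrib]
          refine Finset.sum_congr rfl fun k hk => ?_
          ring
      _ = 0 := by
          have hA0 : ∑ j ∈ Finset.Icc 1 Nx, ∑ k ∈ Finset.Icc 1 Ny, Δt * α i *
              ((∫ y in (b + ((k - 1 : ℕ) : ℝ) * hy)..(b + (k : ℝ) * hy),
                  FCH2D.ev (F i j k) (a + (j : ℝ) * hx) y)
              - ∫ y in (b + ((k - 1 : ℕ) : ℝ) * hy)..(b + (k : ℝ) * hy),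
                  FCH2D.ev (F i j k) (a + ((j - 1 : ℕ) : ℝ) * hx) y) = 0 := by
            rw [Finset.sum_comm]
            refine Finset.sum_eq_zero fun k hk => ?_
            rw [← Finset.mul_sum, hA i k hk, mul_zero]
          have hB0 : ∑ j ∈ Finset.Icc 1 Nx, ∑ k ∈ Finset.Icc 1 Ny, Δt * α i *
              ((∫ x in (a + ((j - 1 : ℕ) : ℝ) * hx)..(a + (j : ℝ) * hx),
                  FCH2D.ev (G i j k) x (b + (k : ℝ) * hy))
              - ∫ x in (a + ((j - 1 : ℕ) : ℝ) * hx)..(a + (j : ℝ) * hx),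
                  FCH2D.ev (G i j k) x (b + ((k - 1 : ℕ) : ℝ) * hy)) = 0 := by
            refine Finset.sum_eq_zero fun j hj => ?_
            rw [← Finset.mul_sum, hB i j hj, mul_zero]
          rw [hA0, hB0, add_zero]
  simp only [Finset.sum_sub_distrib]
  rw [hzero, sub_zero]
end
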